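/- Assume the CFL condition. Then for every j = 0, …, N, the grid scheme satisfies sup_{α∈ℤ^d} |U^j_α| ≤ ‖u₀‖_{L^∞(ℝ^d)} + t_j ‖f‖_{L^∞(ℝ^d)}. -/

import Mathlib

open scoped BigOperators

/-- `J_p(ξ) = |ξ|^{p-2} ξ`. -/
noncomputable def Jp (p ξ : ℝ) : ℝ := |ξ| ^ (p - 2) * ξ

/-- The grid point `y_β = h β ∈ ℝ^d` for `β ∈ ℤ^d`. -/
noncomputable def ygrid (d : ℕ) (h : ℝ) (β : Fin d → ℤ) : EuclideanSpace ℝ (Fin d) :=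
  (WithLp.equiv 2 (Fin d → ℝ)).symm (fun i => h * (β i : ℝ))

lemma Jp_zero (p : ℝ) : Jp p 0 = 0 := by simp [Jp]

lemma Jp_neg (p u : ℝ) : Jp p (-u) = - Jp p u := by simp [Jp, mul_neg]

lemma Jp_of_nonneg (p : ℝ) (hp : 2 ≤ p) {u : ℝ} (hu : 0 ≤ u) : Jp p u = u ^ (p - 1) := by
  rcases eq_or_lt_of_le hu with h0 | h0
  · rw [← h0, Jp_zero, Real.zero_rpow (by linarith)]
  · rw [Jp, abs_of_nonneg hu, show p - 1 = p - 2 + 1 by ring, Real.rpow_add_one h0.ne']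

lemma Jp_mono (p : ℝ) (hp : 2 ≤ p) : Monotone (Jp p) := by
  intro u v huv
  rcases le_total 0 u with hu | hu
  · rw [Jp_of_nonneg p hp hu, Jp_of_nonneg p hp (hu.trans huv)]
    exact Real.rpow_le_rpow hu huv (by linarith)
  · rcases le_total 0 v with hv | hv
    · have h1 : Jp p u ≤ 0 := mul_nonpos_of_nonneg_of_nonpos (Real.rpow_nonneg (abs_nonneg u) _) hu
      have h2 : 0 ≤ Jp p v := mul_nonneg (Real.rpow_nonneg (abs_nonneg v) _) hv
      linarith
    · have h3 : Jp p (-v) ≤ Jp p (-u) := by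
        rw [Jp_of_nonneg p hp (by linarith), Jp_of_nonneg p hp (by linarith)]
        exact Real.rpow_le_rpow (by linarith) (by linarith) (by linarith)
      rw [Jp_neg, Jp_neg] at h3; linarith

lemma rpow_sub_rpow_le (p : ℝ) (hp : 2 ≤ p) {u v K : ℝ} (hv : 0 ≤ v) (hvu : v ≤ u)
    (huK : u ≤ K) : u ^ (p - 1) - v ^ (p - 1) ≤ (p - 1) * K ^ (p - 2) * (u - v) := by
  rcases eq_or_lt_of_le (hv.trans hvu) with h0 | h0
  · have hu0 : u = 0 := h0.symm
    have hv0 : v = 0 := le_antisymm (hvu.trans_eq hu0) hv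
    subst hu0; subst hv0
    have hK : 0 ≤ K := huK
    have : (0:ℝ) ≤ (p - 1) * K ^ (p - 2) * (0 - 0) := by simp
    simpa using this
  · have hs : -1 ≤ v / u - 1 := by
      have : 0 ≤ v / u := div_nonneg hv h0.le
      linarith
    have hb := one_add_mul_self_le_rpow_one_add hs (by linarith : (1:ℝ) ≤ p - 1)
    have he : (1 + (v / u - 1)) = v / u := by ring
    rw [he] at hb
    have hdiv : (v / u) ^ (p - 1) = v ^ (p - 1) / u ^ (p - 1) := Real.div_rpow hv h0.le _
    have hup : 0 < u ^ (p - 1) := Real.rpow_pos_of_pos h0 _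
    have h1 : u ^ (p - 1) * (1 + (p - 1) * (v / u - 1)) ≤ v ^ (p - 1) := by
      rw [hdiv] at hb
      calc u ^ (p - 1) * (1 + (p - 1) * (v / u - 1))
          ≤ u ^ (p - 1) * (v ^ (p - 1) / u ^ (p - 1)) := by
            exact mul_le_mul_of_nonneg_left hb hup.le
        _ = v ^ (p - 1) := by field_simp
    have h2 : u ^ (p - 1) = u ^ (p - 2) * u := by
      rw [show p - 1 = p - 2 + 1 by ring, Real.rpow_add_one h0.ne']
    have h3 : u ^ (p - 1) * (1 + (p - 1) * (v / u - 1))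
        = u ^ (p - 1) - (p - 1) * (u ^ (p - 2) * (u - v)) := by
      rw [h2]; field_simp; ring
    have h4 : u ^ (p - 2) ≤ K ^ (p - 2) :=
      Real.rpow_le_rpow h0.le huK (by linarith)
    have h5 : u ^ (p - 1) - v ^ (p - 1) ≤ (p - 1) * (u ^ (p - 2) * (u - v)) := by
      rw [h3] at h1; linarith
    have h6 : u ^ (p - 2) * (u - v) ≤ K ^ (p - 2) * (u - v) :=
      mul_le_mul_of_nonneg_right h4 (by linarith)
    have h7 : (p - 1) * (u ^ (p - 2) * (u - v)) ≤ (p - 1) * (K ^ (p - 2) * (u - v)) :=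
      mul_le_mul_of_nonneg_left h6 (by linarith)
    nlinarith [h5, h7]

lemma Jp_lip (p : ℝ) (hp : 2 ≤ p) {K u v : ℝ} (hu : |u| ≤ K) (hv : |v| ≤ K) (hvu : v ≤ u) :
    Jp p u - Jp p v ≤ (p - 1) * K ^ (p - 2) * (u - v) := by
  rcases le_total 0 v with h0v | h0v
  · rw [Jp_of_nonneg p hp h0v, Jp_of_nonneg p hp (h0v.trans hvu)]
    exact rpow_sub_rpow_le p hp h0v hvu (le_of_abs_le hu)
  · rcases le_total u 0 with hu0 | hu0
    · have h1 : Jp p (-v) - Jp p (-u) ≤ (p - 1) * K ^ (p - 2) * (-v - -u) := by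
        rw [Jp_of_nonneg p hp (by linarith), Jp_of_nonneg p hp (by linarith)]
        exact rpow_sub_rpow_le p hp (by linarith) (by linarith)
          (by rw [abs_of_nonpos h0v] at hv; linarith)
      rw [Jp_neg, Jp_neg] at h1
      have : (-v) - (-u) = u - v := by ring
      linarith [h1]
    · -- v ≤ 0 ≤ u
      have huK : u ≤ K := le_of_abs_le hu
      have hvK : -v ≤ K := by rw [abs_of_nonpos h0v] at hv; linarith
      have hK0 : 0 ≤ K := hu0.trans huK
      have hnv := Jp_neg p (-v)
      rw [neg_neg] at hnv
      rw [Jp_of_nonneg p hp hu0, hnv, Jp_of_nonneg p hp (by linarith : (0:ℝ) ≤ -v)]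
      have h2 : u ^ (p - 1) ≤ K ^ (p - 2) * u := by
        rw [show p - 1 = p - 2 + 1 by ring]
        rcases eq_or_lt_of_le hu0 with h|h
        · rw [← h, Real.zero_rpow (by linarith)]; simp
        · rw [Real.rpow_add_one h.ne']
          exact mul_le_mul_of_nonneg_right (Real.rpow_le_rpow hu0 huK (by linarith)) hu0
      have h3 : (-v) ^ (p - 1) ≤ K ^ (p - 2) * (-v) := by
        rw [show p - 1 = p - 2 + 1 by ring]
        rcases eq_or_lt_of_le (neg_nonneg.mpr h0v) with h|h
        · rw [← h, Real.zero_rpow (by linarith)]; simp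
        · rw [Real.rpow_add_one h.ne']
          exact mul_le_mul_of_nonneg_right
            (Real.rpow_le_rpow (by linarith) hvK (by linarith)) (by linarith)
      have hKp : 0 ≤ K ^ (p - 2) := Real.rpow_nonneg hK0 _
      have hKuv : 0 ≤ K ^ (p - 2) * (u - v) := mul_nonneg hKp (by linarith)
      have h6 : K ^ (p - 2) * (u - v) ≤ (p - 1) * (K ^ (p - 2) * (u - v)) :=
        le_mul_of_one_le_left hKuv (by linarith)
      nlinarith [h2, h3, h6, hKuv]

lemma Jp_sub_le (p : ℝ) (hp : 2 ≤ p) {K A B c : ℝ} (hA : |A| ≤ K) (hB : |B| ≤ K)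
    (hc : 0 ≤ c) (hK : 0 ≤ K) (hAB : A ≤ B + c) :
    Jp p A - Jp p B ≤ (p - 1) * K ^ (p - 2) * c := by
  rcases le_total A B with hab | hab
  · have h1 := Jp_mono p hp hab
    have hKp : 0 ≤ K ^ (p - 2) := Real.rpow_nonneg hK _
    have h2 : 0 ≤ (p - 1) * K ^ (p - 2) * c := mul_nonneg (mul_nonneg (by linarith) hKp) hc
    linarith
  · calc Jp p A - Jp p B ≤ (p - 1) * K ^ (p - 2) * (A - B) := Jp_lip p hp hA hB hab
      _ ≤ (p - 1) * K ^ (p - 2) * c := by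
          have hKp : 0 ≤ K ^ (p - 2) := Real.rpow_nonneg hK _
          exact mul_le_mul_of_nonneg_left (by linarith) (mul_nonneg (by linarith) hKp)

lemma abs_coord_le_norm_ygrid (d : ℕ) (h : ℝ) (β : Fin d → ℤ) (i : Fin d) :
    |h * (β i : ℝ)| ≤ ‖ygrid d h β‖ := by
  rw [ygrid, EuclideanSpace.norm_eq]
  have h1 : |h * (β i : ℝ)| = Real.sqrt (‖((WithLp.equiv 2 (Fin d → ℝ)).symm
      (fun i => h * (β i : ℝ))) i‖ ^ 2) := by
    simp [Real.sqrt_sq_eq_abs, abs_mul, abs_abs]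
  rw [h1]
  apply Real.sqrt_le_sqrt
  exact Finset.single_le_sum
    (f := fun j => ‖((WithLp.equiv 2 (Fin d → ℝ)).symm (fun i => h * (β i : ℝ))) j‖ ^ 2)
    (fun j _ => by positivity) (Finset.mem_univ i)

/-- The discrete `p`-Laplacian `D_p^h ψ(x) = Σ_β J_p(ψ(x+y_β) - ψ(x)) ω_β`. -/
noncomputable def Dph (d : ℕ) (p h : ℝ) (ω : (Fin d → ℤ) → ℝ)
    (ψ : EuclideanSpace ℝ (Fin d) → ℝ) (x : EuclideanSpace ℝ (Fin d)) : ℝ :=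
  ∑ᶠ β, Jp p (ψ (x + ygrid d h β) - ψ x) * ω β

set_option maxHeartbeats 1000000 in
/-- Stability in the maximum norm (Proposition 3.4). -/
theorem scheme_sup_bound (d : ℕ) (hd : 1 ≤ d) (p : ℝ) (hp : 2 ≤ p)
    (h r τ : ℝ) (hh : 0 < h) (hr : 0 < r) (hτ : 0 < τ) (N : ℕ) (M : ℝ) (hM : 0 < M)
    (ω : (Fin d → ℤ) → ℝ) (hsym : ∀ β, ω (-β) = ω β) (hnn : ∀ β, 0 ≤ ω β)
    (hzero : ∀ β, r ≤ ‖ygrid d h β‖ → ω β = 0)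
    (hsum : ∑ᶠ β, ω β ≤ M * r ^ (-p))
    (a Lu Lf : ℝ) (ha0 : 0 < a) (ha1 : a ≤ 1)
    (u₀ f : EuclideanSpace ℝ (Fin d) → ℝ)
    (hu₀b : BddAbove (Set.range fun x => |u₀ x|))
    (hfb : BddAbove (Set.range fun x => |f x|))
    (hu₀ : ∀ x y, |u₀ x - u₀ y| ≤ Lu * ‖x - y‖ ^ a)
    (hf : ∀ x y, |f x - f y| ≤ Lf * ‖x - y‖ ^ a)
    (U : ℕ → EuclideanSpace ℝ (Fin d) → ℝ)
    (hU0 : ∀ x, U 0 x = u₀ x)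
    (hUrec : ∀ j x, U (j + 1) x = U j x + τ * (Dph d p h ω (U j) x + f x))
    (hCFL : τ * (p - 1) * M * (Lu + (N : ℝ) * τ * Lf) ^ (p - 2) ≤
      r ^ (2 + (1 - a) * (p - 2))) :
    ∀ j ≤ N, ∀ α : Fin d → ℤ,
      |U j (ygrid d h α)| ≤ (⨆ x, |u₀ x|) + (j : ℝ) * τ * ⨆ x, |f x| := by
  classical
  set C0 := ⨆ x, |u₀ x| with hC0def
  set F := ⨆ x, |f x| with hFdef
  have hC0le : ∀ x, |u₀ x| ≤ C0 := fun x => le_ciSup hu₀b x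
  have hFle : ∀ x, |f x| ≤ F := fun x => le_ciSup hfb x
  have hF0 : (0:ℝ) ≤ F := (abs_nonneg _).trans (hFle 0)
  obtain ⟨z, hz⟩ : ∃ z : EuclideanSpace ℝ (Fin d), ‖z‖ = 1 :=
    ⟨EuclideanSpace.single ⟨0, hd⟩ (1:ℝ), by rw [EuclideanSpace.norm_single]; norm_num⟩
  have hLu : 0 ≤ Lu := by
    have h1 := hu₀ z 0
    rw [sub_zero, hz, Real.one_rpow, mul_one] at h1
    exact (abs_nonneg _).trans h1
  have hLf : 0 ≤ Lf := by
    have h1 := hf z 0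
    rw [sub_zero, hz, Real.one_rpow, mul_one] at h1
    exact (abs_nonneg _).trans h1
  have hfin : (Function.support ω).Finite := by
    apply Set.Finite.subset
      (Set.Finite.pi (fun i : Fin d => Set.finite_Icc (-⌈r / h⌉) ⌈r / h⌉))
    intro β hβ
    have hlt : ‖ygrid d h β‖ < r := by
      by_contra hge
      exact hβ (hzero β (not_lt.1 hge))
    rw [Set.mem_univ_pi]
    intro i
    have h1 : |h * (β i : ℝ)| ≤ ‖ygrid d h β‖ := abs_coord_le_norm_ygrid d h β i
    have h2 : |(β i : ℝ)| ≤ r / h := by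
      rw [abs_mul, abs_of_pos hh] at h1
      rw [le_div_iff₀ hh]
      nlinarith [abs_nonneg ((β i : ℝ))]
    have h3 : ((β i : ℝ)) ≤ r / h := le_of_abs_le h2
    have h4 : -(r / h) ≤ (β i : ℝ) := neg_le_of_abs_le h2
    rw [Set.mem_Icc]
    constructor
    · have h5 : -((⌈r / h⌉ : ℤ) : ℝ) ≤ ((β i : ℤ) : ℝ) := by
        have := Int.le_ceil (r / h)
        push_cast
        linarith
      exact_mod_cast h5
    · have h5 : ((β i : ℤ) : ℝ) ≤ ((⌈r / h⌉ : ℤ) : ℝ) := by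
        have := Int.le_ceil (r / h)
        push_cast
        linarith
      exact_mod_cast h5
  set S : Finset (Fin d → ℤ) := hfin.toFinset with hSdef
  have hmemS : ∀ β, ω β ≠ 0 → β ∈ S := fun β hβ => hfin.mem_toFinset.2 hβ
  have hDrw : ∀ (ψ : EuclideanSpace ℝ (Fin d) → ℝ) x,
      Dph d p h ω ψ x = ∑ β ∈ S, Jp p (ψ (x + ygrid d h β) - ψ x) * ω β := by
    intro ψ x
    apply finsum_eq_finset_sum_of_support_subset
    intro β hβ
    rw [Function.mem_support] at hβ
    have h0 : ω β ≠ 0 := fun hz0 => hβ (by rw [hz0, mul_zero])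
    exact Finset.mem_coe.2 (hmemS β h0)
  have hωrw : ∑ᶠ β, ω β = ∑ β ∈ S, ω β :=
    finsum_eq_finset_sum_of_support_subset _ (fun β hβ => Finset.mem_coe.2 (hmemS β hβ))
  have hωnn : 0 ≤ ∑ β ∈ S, ω β := Finset.sum_nonneg fun β _ => hnn β
  have hsum' : ∑ β ∈ S, ω β ≤ M * r ^ (-p) := hωrw ▸ hsum
  have hCFLkey : ∀ L : ℝ, 0 ≤ L → L ≤ Lu + (N:ℝ) * τ * Lf →
      τ * ((p - 1) * (L * r ^ a) ^ (p - 2) * (∑ β ∈ S, ω β)) ≤ 1 := by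
    intro L hL hLle
    have hra : (0:ℝ) ≤ r ^ a := Real.rpow_nonneg hr.le a
    have h1 : (L * r ^ a) ^ (p - 2) = L ^ (p - 2) * r ^ (a * (p - 2)) := by
      rw [Real.mul_rpow hL hra, ← Real.rpow_mul hr.le]
    have h2 : L ^ (p - 2) ≤ (Lu + (N:ℝ) * τ * Lf) ^ (p - 2) :=
      Real.rpow_le_rpow hL hLle (by linarith)
    have hLp : 0 ≤ L ^ (p - 2) := Real.rpow_nonneg hL _
    have hrp : 0 < r ^ (a * (p - 2)) := Real.rpow_pos_of_pos hr _
    have hrp2 : 0 < r ^ (-p) := Real.rpow_pos_of_pos hr _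
    calc τ * ((p - 1) * (L * r ^ a) ^ (p - 2) * (∑ β ∈ S, ω β))
        = (τ * (p - 1) * L ^ (p - 2)) * (r ^ (a * (p - 2)) * (∑ β ∈ S, ω β)) := by
          rw [h1]; ring
      _ ≤ (τ * (p - 1) * L ^ (p - 2)) * (r ^ (a * (p - 2)) * (M * r ^ (-p))) := by
          exact mul_le_mul_of_nonneg_left (mul_le_mul_of_nonneg_left hsum' hrp.le)
            (mul_nonneg (mul_nonneg hτ.le (by linarith)) hLp)
      _ ≤ (τ * (p - 1) * (Lu + (N:ℝ) * τ * Lf) ^ (p - 2)) *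
            (r ^ (a * (p - 2)) * (M * r ^ (-p))) := by
          apply mul_le_mul_of_nonneg_right
            (mul_le_mul_of_nonneg_left h2 (mul_nonneg hτ.le (by linarith)))
          positivity
      _ = (τ * (p - 1) * M * (Lu + (N:ℝ) * τ * Lf) ^ (p - 2)) *
            (r ^ (a * (p - 2)) * r ^ (-p)) := by ring
      _ ≤ r ^ (2 + (1 - a) * (p - 2)) * (r ^ (a * (p - 2)) * r ^ (-p)) := by
          exact mul_le_mul_of_nonneg_right hCFL (by positivity)
      _ = 1 := by
          rw [← Real.rpow_add hr, ← Real.rpow_add hr]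
          rw [show 2 + (1 - a) * (p - 2) + (a * (p - 2) + -p) = 0 by ring, Real.rpow_zero]
  suffices main : ∀ j, j ≤ N →
      (∀ x, |U j x| ≤ C0 + (j:ℝ) * τ * F) ∧
      (∀ x y, |U j x - U j y| ≤ (Lu + (j:ℝ) * τ * Lf) * ‖x - y‖ ^ a) by
    intro j hj α
    exact (main j hj).1 _
  intro j
  induction j with
  | zero =>
    intro _
    constructor
    · intro x; rw [hU0]; simpa using hC0le x
    · intro x y; rw [hU0, hU0]; simpa using hu₀ x y
  | succ j ih =>
    intro hjN
    have hjN' : j ≤ N := Nat.le_of_succ_le hjN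
    obtain ⟨ihB, ihH⟩ := ih hjN'
    set L : ℝ := Lu + (j:ℝ) * τ * Lf with hLdef
    have hL0 : 0 ≤ L := by positivity
    have hLle : L ≤ Lu + (N:ℝ) * τ * Lf := by
      have hc : (j:ℝ) ≤ (N:ℝ) := Nat.cast_le.2 hjN'
      have h6 : (j:ℝ) * τ * Lf ≤ (N:ℝ) * τ * Lf :=
        mul_le_mul_of_nonneg_right (mul_le_mul_of_nonneg_right hc hτ.le) hLf
      rw [hLdef]; linarith
    have hCFL1 := hCFLkey L hL0 hLle
    set K : ℝ := L * r ^ a with hKdef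
    have hK0 : 0 ≤ K := mul_nonneg hL0 (Real.rpow_nonneg hr.le a)
    have hdiff : ∀ x β, ω β ≠ 0 → |U j (x + ygrid d h β) - U j x| ≤ K := by
      intro x β hβ
      have h1 := ihH (x + ygrid d h β) x
      rw [add_sub_cancel_left] at h1
      have h3 : ‖ygrid d h β‖ < r := lt_of_not_ge fun hge => hβ (hzero β hge)
      calc |U j (x + ygrid d h β) - U j x| ≤ L * ‖ygrid d h β‖ ^ a := h1
        _ ≤ K := mul_le_mul_of_nonneg_left
            (Real.rpow_le_rpow (norm_nonneg _) h3.le ha0.le) hL0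
    have hcore : ∀ (ψ : EuclideanSpace ℝ (Fin d) → ℝ) x (B : (Fin d → ℤ) → ℝ) (c : ℝ),
        0 ≤ c →
        (∀ β, ω β ≠ 0 → |ψ (x + ygrid d h β) - ψ x| ≤ K) →
        (∀ β, ω β ≠ 0 → |B β| ≤ K) →
        (∀ β, ω β ≠ 0 → ψ (x + ygrid d h β) - ψ x ≤ B β + c) →
        τ * Dph d p h ω ψ x ≤ τ * (∑ β ∈ S, Jp p (B β) * ω β) + c := by
      intro ψ x B c hc hψK hBK hle
      have hsumle : ∑ β ∈ S, Jp p (ψ (x + ygrid d h β) - ψ x) * ω β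
          ≤ ∑ β ∈ S, (Jp p (B β) + (p - 1) * K ^ (p - 2) * c) * ω β := by
        apply Finset.sum_le_sum
        intro β hβS
        rcases eq_or_ne (ω β) 0 with h0 | h0
        · rw [h0]; simp
        · have hJ := Jp_sub_le p hp (hψK β h0) (hBK β h0) hc hK0 (hle β h0)
          have hωβ := hnn β
          nlinarith
      have hexp : ∑ β ∈ S, (Jp p (B β) + (p - 1) * K ^ (p - 2) * c) * ω β
          = (∑ β ∈ S, Jp p (B β) * ω β) + (p - 1) * K ^ (p - 2) * c * (∑ β ∈ S, ω β) := by
        rw [Finset.mul_sum, ← Finset.sum_add_distrib]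
        apply Finset.sum_congr rfl; intro β _; ring
      have h2 : τ * ((p - 1) * K ^ (p - 2) * c * (∑ β ∈ S, ω β)) ≤ c := by
        have h3 := mul_le_mul_of_nonneg_left hCFL1 hc
        nlinarith [h3]
      rw [hDrw]
      calc τ * (∑ β ∈ S, Jp p (ψ (x + ygrid d h β) - ψ x) * ω β)
          ≤ τ * ((∑ β ∈ S, Jp p (B β) * ω β)
              + (p - 1) * K ^ (p - 2) * c * (∑ β ∈ S, ω β)) :=
            mul_le_mul_of_nonneg_left (hsumle.trans_eq hexp) hτ.le
        _ = τ * (∑ β ∈ S, Jp p (B β) * ω β)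
              + τ * ((p - 1) * K ^ (p - 2) * c * (∑ β ∈ S, ω β)) := by ring
        _ ≤ τ * (∑ β ∈ S, Jp p (B β) * ω β) + c := by linarith
    constructor
    · -- sup bound
      intro x
      have hBx := abs_le.1 (ihB x)
      have hup : τ * Dph d p h ω (U j) x ≤ (C0 + (j:ℝ) * τ * F) - U j x := by
        have hk := hcore (U j) x (fun _ => 0) ((C0 + (j:ℝ) * τ * F) - U j x)
          (by linarith [hBx.2]) (hdiff x) (fun β _ => by simpa using hK0)
          (fun β hβ => by
            have h5 := (abs_le.1 (ihB (x + ygrid d h β))).2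
            linarith)
        simpa [Jp_zero] using hk
      have hneg : Dph d p h ω (fun z => -U j z) x = - Dph d p h ω (U j) x := by
        rw [hDrw, hDrw, ← Finset.sum_neg_distrib]
        apply Finset.sum_congr rfl
        intro β _
        have he : (fun z => -U j z) (x + ygrid d h β) - (fun z => -U j z) x
            = -(U j (x + ygrid d h β) - U j x) := by simp only []; ring
        rw [he, Jp_neg]; ring
      have hlo : τ * (- Dph d p h ω (U j) x) ≤ U j x + (C0 + (j:ℝ) * τ * F) := by
        have hk := hcore (fun z => -U j z) x (fun _ => 0) (U j x + (C0 + (j:ℝ) * τ * F))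
          (by linarith [hBx.1])
          (fun β hβ => by
            have he : (fun z => -U j z) (x + ygrid d h β) - (fun z => -U j z) x
                = -(U j (x + ygrid d h β) - U j x) := by simp only []; ring
            rw [he, abs_neg]
            exact hdiff x β hβ)
          (fun β _ => by simpa using hK0)
          (fun β hβ => by
            have h5 := (abs_le.1 (ihB (x + ygrid d h β))).1
            linarith)
        rw [hneg] at hk
        simpa [Jp_zero] using hk
      have hfx := abs_le.1 (hFle x)
      have hfx2 : τ * f x ≤ τ * F := mul_le_mul_of_nonneg_left hfx.2 hτ.le
      have hfx1 : τ * (-F) ≤ τ * f x := mul_le_mul_of_nonneg_left hfx.1 hτ.le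
      have hE : τ * (Dph d p h ω (U j) x + f x)
          = τ * Dph d p h ω (U j) x + τ * f x := by ring
      rw [hUrec j x, abs_le]
      push_cast
      constructor
      · linarith [hlo, hfx1]
      · linarith [hup, hfx2]
    · -- Hölder bound
      have hone : ∀ x y : EuclideanSpace ℝ (Fin d),
          U (j+1) x - U (j+1) y ≤ (L + τ * Lf) * ‖x - y‖ ^ a := by
        intro x y
        have hδ0' : 0 ≤ ‖x - y‖ ^ a := Real.rpow_nonneg (norm_nonneg _) a
        have hHxy := abs_le.1 (ihH x y)
        have hc0 : 0 ≤ L * ‖x - y‖ ^ a - (U j x - U j y) := by linarith [hHxy.2]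
        have hkey := hcore (U j) x (fun β => U j (y + ygrid d h β) - U j y)
          (L * ‖x - y‖ ^ a - (U j x - U j y)) hc0 (hdiff x) (fun β hβ => hdiff y β hβ)
          (fun β hβ => by
            have h5 := (abs_le.1 (ihH (x + ygrid d h β) (y + ygrid d h β))).2
            have h6 : x + ygrid d h β - (y + ygrid d h β) = x - y := by abel
            rw [h6] at h5
            linarith)
        rw [← hDrw (U j) y] at hkey
        have h7 := le_of_abs_le (hf x y)
        have h8 : τ * (f x - f y) ≤ τ * (Lf * ‖x - y‖ ^ a) :=
          mul_le_mul_of_nonneg_left h7 hτ.le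
        rw [hUrec j x, hUrec j y]
        linarith [hkey, h8]
      intro x y
      have h8 := hone x y
      have h9 := hone y x
      rw [norm_sub_rev y x] at h9
      rw [show (Lu + ((j:ℕ)+1 : ℕ) * τ * Lf : ℝ) = L + τ * Lf by
        rw [hLdef]; push_cast; ring]
      exact abs_le.2 ⟨by linarith, h8⟩
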